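/- Right conditional NEP (Chernoff part): For an IID pair $(X,Y)$ with conditional pmf $p(x|y)$, for any $\delta \geq 0$ and positive integer $n$, $\Pr\{-\frac{1}{n}\ln p(X^n|Y^n) > H(X|Y)+\delta\} \leq e^{-n r_{X|Y}(\delta)}$ where $r_{X|Y}(\delta) = \sup_{\lambda\geq 0}[\lambda(H(X|Y)+\delta) - \ln\sum_y p(y)\sum_x p(x|y)^{1-\lambda}]$. -/

import Mathlib

open scoped BigOperators

/-- The conditional right rate function
`r_{X|Y}(δ) = sup_{λ≥0} [λ(H(X|Y)+δ) - ln Σ_y p(y) Σ_x p(x|y)^{1-λ}]`. -/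
noncomputable def rateRC {α β : Type*} (pY : β → ℝ) (pXY : α → β → ℝ) (Hc δ : ℝ) : ℝ :=
  sSup {v : ℝ | ∃ l : ℝ, 0 ≤ l ∧
      Summable (fun xy : α × β => pY xy.2 * (pXY xy.1 xy.2 * pXY xy.1 xy.2 ^ (-l))) ∧
      v = l * (Hc + δ)
          - Real.log (∑' xy : α × β, pY xy.2 * (pXY xy.1 xy.2 * pXY xy.1 xy.2 ^ (-l)))}

lemma pi_prod_summable_tsum {γ : Type*} (f : γ → ℝ) (h0 : ∀ x, 0 ≤ f x) (hs : Summable f) :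
    ∀ n : ℕ, Summable (fun s : Fin n → γ => ∏ i, f (s i)) ∧
      (∑' s : Fin n → γ, ∏ i, f (s i)) = (∑' x, f x) ^ n := by
  have hnorm : Summable fun x => ‖f x‖ := by
    have heq : (fun x => ‖f x‖) = f := by
      funext x; rw [Real.norm_eq_abs, abs_of_nonneg (h0 x)]
    rw [heq]; exact hs
  intro n
  induction n with
  | zero =>
    constructor
    · exact Summable.of_finite
    · simp [tsum_eq_single (default : Fin 0 → γ)
        (fun b hb => absurd (Subsingleton.elim b default) hb)]
  | succ n ih =>
    have hGnorm : Summable fun s : Fin n → γ => ‖∏ i, f (s i)‖ := by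
      have heq : (fun s : Fin n → γ => ‖∏ i, f (s i)‖) = fun s => ∏ i, f (s i) := by
        funext s
        rw [Real.norm_eq_abs, abs_of_nonneg (Finset.prod_nonneg fun i _ => h0 _)]
      rw [heq]; exact ih.1
    have hmul : Summable fun p : γ × (Fin n → γ) => f p.1 * ∏ i, f (p.2 i) :=
      @summable_mul_of_summable_norm ℝ γ (Fin n → γ) _ _ f (fun s => ∏ i, f (s i)) hnorm hGnorm
    have hcomp : (fun s : Fin (n+1) → γ => ∏ i, f (s i))
        = (fun p : γ × (Fin n → γ) => f p.1 * ∏ i, f (p.2 i)) ∘ ((Fin.consEquiv (fun _ : Fin (n+1) => γ)).symm) := by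
      funext s
      simp [Fin.consEquiv, Fin.prod_univ_succ, Fin.tail]
    constructor
    · rw [hcomp]
      exact hmul.comp_injective ((Fin.consEquiv (fun _ : Fin (n+1) => γ)).symm).injective
    · have h1 : (∑' s : Fin (n+1) → γ, ∏ i, f (s i))
          = ∑' p : γ × (Fin n → γ), f p.1 * ∏ i, f (p.2 i) := by
        rw [hcomp]
        exact (((Fin.consEquiv (fun _ : Fin (n+1) => γ)).symm).tsum_eq (fun p : γ × (Fin n → γ) => f p.1 * ∏ i, f (p.2 i)))
      rw [h1, ← tsum_mul_tsum_of_summable_norm hnorm hGnorm, ih.2, pow_succ]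
      ring

lemma joint_summable {α β : Type} (pY : β → ℝ) (pXY : α → β → ℝ)
    (hY0 : ∀ y, 0 ≤ pY y) (hY1 : HasSum pY 1)
    (hXY0 : ∀ x y, 0 ≤ pXY x y) (hXY1 : ∀ y, HasSum (fun x => pXY x y) 1) :
    Summable (fun xy : α × β => pY xy.2 * (pXY xy.1 xy.2 * pXY xy.1 xy.2 ^ (-(0:ℝ)))) := by
  set F : β × α → ℝ := fun yx => pY yx.1 * pXY yx.2 yx.1 with hF
  have h1 : ∀ y, Summable fun x => F (y, x) := by
    intro y
    show Summable fun x => pY y * pXY x y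
    exact (hXY1 y).summable.mul_left _
  have h2 : Summable fun y => ∑' x, F (y, x) := by
    have heq : (fun y => ∑' x, F (y, x)) = pY := by
      funext y
      show (∑' x, pY y * pXY x y) = pY y
      rw [tsum_mul_left, (hXY1 y).tsum_eq, mul_one]
    rw [heq]; exact hY1.summable
  have hj0 : Summable F :=
    (summable_prod_of_nonneg (fun yx => mul_nonneg (hY0 _) (hXY0 _ _))).2 ⟨h1, h2⟩
  have heq : (fun xy : α × β => pY xy.2 * (pXY xy.1 xy.2 * pXY xy.1 xy.2 ^ (-(0:ℝ))))
      = fun xy : α × β => F xy.swap := by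
    funext xy; simp [hF]
  rw [heq]; exact hj0.prod_symm

/-- Right conditional NEP (Chernoff part): for an IID pair `(X,Y)` with conditional
pmf `p(x|y)`, `Pr{-(1/n) ln p(X^n|Y^n) > H(X|Y) + δ} ≤ exp(-n r_{X|Y}(δ))`. -/
theorem stmt12 {α β : Type} [Countable α] [Countable β]
    (pY : β → ℝ) (pXY : α → β → ℝ)
    (hY0 : ∀ y, 0 ≤ pY y) (hY1 : HasSum pY 1)
    (hXY0 : ∀ x y, 0 ≤ pXY x y) (hXY1 : ∀ y, HasSum (fun x => pXY x y) 1)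
    (Hc : ℝ)
    (hHc : HasSum (fun xy : α × β =>
        pY xy.2 * pXY xy.1 xy.2 * (-Real.log (pXY xy.1 xy.2))) Hc)
    (δ : ℝ) (hδ : 0 ≤ δ) (n : ℕ) (hn : 0 < n) :
    (∑' s : Fin n → α × β,
        Set.indicator {s : Fin n → α × β |
            -(1 / (n : ℝ)) * Real.log (∏ i, pXY (s i).1 (s i).2) > Hc + δ}
          (fun s => ∏ i, pY (s i).2 * pXY (s i).1 (s i).2) s)
      ≤ Real.exp (-(n : ℝ) * rateRC pY pXY Hc δ) := by
  classical
  have hn' : (0:ℝ) < n := by exact_mod_cast hn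
  -- conditional entropy is nonnegative
  have hHcnn : 0 ≤ Hc := by
    have hterm : ∀ xy : α × β, 0 ≤ pY xy.2 * pXY xy.1 xy.2 * (-Real.log (pXY xy.1 xy.2)) := by
      intro xy
      have hle : pXY xy.1 xy.2 ≤ 1 :=
        le_hasSum (hXY1 xy.2) xy.1 (fun x _ => hXY0 x xy.2)
      exact mul_nonneg (mul_nonneg (hY0 _) (hXY0 _ _))
        (neg_nonneg.2 (Real.log_nonpos (hXY0 _ _) hle))
    exact hasSum_le hterm hasSum_zero hHc
  set E : Set (Fin n → α × β) := {s : Fin n → α × β |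
      -(1 / (n : ℝ)) * Real.log (∏ i, pXY (s i).1 (s i).2) > Hc + δ} with hE
  set g : (Fin n → α × β) → ℝ := fun s => ∏ i, pY (s i).2 * pXY (s i).1 (s i).2 with hg
  have hgnn : ∀ s, 0 ≤ g s := fun s =>
    Finset.prod_nonneg fun i _ => mul_nonneg (hY0 _) (hXY0 _ _)
  set L : ℝ := ∑' s : Fin n → α × β, Set.indicator E g s with hLdef
  set S : Set ℝ := {v : ℝ | ∃ l : ℝ, 0 ≤ l ∧
      Summable (fun xy : α × β => pY xy.2 * (pXY xy.1 xy.2 * pXY xy.1 xy.2 ^ (-l))) ∧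
      v = l * (Hc + δ)
          - Real.log (∑' xy : α × β, pY xy.2 * (pXY xy.1 xy.2 * pXY xy.1 xy.2 ^ (-l)))} with hSdef
  have hR : rateRC pY pXY Hc δ = sSup S := rfl
  -- S is nonempty (take l = 0)
  have hjoint : Summable (fun xy : α × β =>
      pY xy.2 * (pXY xy.1 xy.2 * pXY xy.1 xy.2 ^ (-(0:ℝ)))) :=
    joint_summable pY pXY hY0 hY1 hXY0 hXY1
  have hSne : S.Nonempty := by
    refine ⟨0 * (Hc + δ)
      - Real.log (∑' xy : α × β, pY xy.2 * (pXY xy.1 xy.2 * pXY xy.1 xy.2 ^ (-(0:ℝ)))),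
      0, le_refl 0, hjoint, rfl⟩
  -- key Chernoff bound for each element of S
  have key : ∀ v ∈ S, L ≤ Real.exp (-(n:ℝ) * v) := by
    rintro v ⟨l, hl, hsumf, rfl⟩
    set f : α × β → ℝ := fun xy => pY xy.2 * (pXY xy.1 xy.2 * pXY xy.1 xy.2 ^ (-l)) with hf
    have hfnn : ∀ xy, 0 ≤ f xy := fun xy =>
      mul_nonneg (hY0 _) (mul_nonneg (hXY0 _ _) (Real.rpow_nonneg (hXY0 _ _) _))
    set Z : ℝ := ∑' xy : α × β, f xy with hZ
    -- Z > 0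
    have hZpos : 0 < Z := by
      obtain ⟨y0, hy0⟩ : ∃ y, pY y ≠ 0 := by
        by_contra h
        push_neg at h
        have : pY = fun _ => 0 := funext h
        rw [this] at hY1
        simpa using hY1.unique hasSum_zero
      obtain ⟨x0, hx0⟩ : ∃ x, pXY x y0 ≠ 0 := by
        by_contra h
        push_neg at h
        have : (fun x => pXY x y0) = fun _ => 0 := funext h
        have h1 := hXY1 y0
        rw [this] at h1
        simpa using h1.unique hasSum_zero
      have hy0' : 0 < pY y0 := lt_of_le_of_ne (hY0 y0) (Ne.symm hy0)
      have hx0' : 0 < pXY x0 y0 := lt_of_le_of_ne (hXY0 x0 y0) (Ne.symm hx0)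
      have hfpos : 0 < f (x0, y0) :=
        mul_pos hy0' (mul_pos hx0' (Real.rpow_pos_of_pos hx0' _))
      exact lt_of_lt_of_le hfpos (Summable.le_tsum hsumf (x0, y0) fun b _ => hfnn b)
    set C : ℝ := Real.exp (-((n:ℝ) * l * (Hc + δ))) with hC
    have lemA := pi_prod_summable_tsum f hfnn hsumf n
    -- pointwise bound
    have pointwise : ∀ s : Fin n → α × β,
        Set.indicator E g s ≤ C * ∏ i, f (s i) := by
      intro s
      by_cases hsE : s ∈ E
      · rw [Set.indicator_of_mem hsE]
        have hPi : ∀ i : Fin n, 0 < pXY (s i).1 (s i).2 := by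
          by_contra h
          push_neg at h
          obtain ⟨i, hi⟩ := h
          have hzero : pXY (s i).1 (s i).2 = 0 := le_antisymm hi (hXY0 _ _)
          have hP0 : (∏ i, pXY (s i).1 (s i).2) = 0 :=
            Finset.prod_eq_zero (Finset.mem_univ i) hzero
          have := hsE
          rw [hE] at this
          simp only [Set.mem_setOf_eq, hP0, Real.log_zero, mul_zero] at this
          linarith
        set P : ℝ := ∏ i, pXY (s i).1 (s i).2 with hP
        have hPpos : 0 < P := Finset.prod_pos fun i _ => hPi i
        have hsE' : Hc + δ < -(1 / (n:ℝ)) * Real.log P := hsE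
        have hlog : Real.log P < -((n:ℝ) * (Hc + δ)) := by
          have h2 : (n:ℝ) * (Hc + δ) < (n:ℝ) * (-(1/(n:ℝ)) * Real.log P) :=
            (mul_lt_mul_iff_right₀ hn').2 hsE'
          have h3 : (n:ℝ) * (-(1/(n:ℝ)) * Real.log P) = -Real.log P := by
            field_simp
          linarith
        have hkey : 1 ≤ C * P ^ (-l) := by
          have hPe : P ^ (-l) = Real.exp (Real.log P * (-l)) :=
            Real.rpow_def_of_pos hPpos _
          rw [hPe, hC, ← Real.exp_add]
          have h4 : l * Real.log P ≤ l * (-((n:ℝ) * (Hc + δ))) :=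
            mul_le_mul_of_nonneg_left hlog.le hl
          apply Real.one_le_exp
          nlinarith [h4]
        have hGs : (∏ i, f (s i)) = g s * P ^ (-l) := by
          calc (∏ i, f (s i))
              = ∏ i, ((pY (s i).2 * pXY (s i).1 (s i).2) * pXY (s i).1 (s i).2 ^ (-l)) := by
                apply Finset.prod_congr rfl
                intro i _
                simp only [hf]; ring
            _ = (∏ i, pY (s i).2 * pXY (s i).1 (s i).2) * ∏ i, pXY (s i).1 (s i).2 ^ (-l) :=
                Finset.prod_mul_distrib
            _ = g s * P ^ (-l) := by
                rw [Real.finset_prod_rpow _ _ (fun i _ => hXY0 _ _) (-l)]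
        rw [hGs]
        calc g s = g s * 1 := (mul_one _).symm
          _ ≤ g s * (C * P ^ (-l)) := mul_le_mul_of_nonneg_left hkey (hgnn s)
          _ = C * (g s * P ^ (-l)) := by ring
      · rw [Set.indicator_of_notMem hsE]
        exact mul_nonneg (Real.exp_pos _).le (Finset.prod_nonneg fun i _ => hfnn _)
    have hCG : Summable fun s : Fin n → α × β => C * ∏ i, f (s i) := lemA.1.mul_left C
    have hindnn : ∀ s, 0 ≤ Set.indicator E g s :=
      fun s => Set.indicator_nonneg (fun s _ => hgnn s) s
    have hindsum : Summable (Set.indicator E g) :=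
      Summable.of_nonneg_of_le hindnn pointwise hCG
    have hLle : L ≤ ∑' s : Fin n → α × β, C * ∏ i, f (s i) :=
      Summable.tsum_le_tsum pointwise hindsum hCG
    rw [tsum_mul_left, lemA.2] at hLle
    have hfinal : C * Z ^ n = Real.exp (-(n:ℝ) * (l * (Hc + δ) - Real.log Z)) := by
      rw [show -(n:ℝ) * (l * (Hc + δ) - Real.log Z)
          = -((n:ℝ) * l * (Hc + δ)) + (n:ℝ) * Real.log Z by ring,
        Real.exp_add, Real.exp_nat_mul, Real.exp_log hZpos, hC]
    rw [← hZ] at hLle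
    rw [← hfinal]
    exact hLle
  -- conclude via the supremum
  rw [hR]
  by_contra hcon
  push_neg at hcon
  have hLpos : 0 < L := lt_trans (Real.exp_pos _) hcon
  have hlog : -(n:ℝ) * sSup S < Real.log L := (Real.lt_log_iff_exp_lt hLpos).2 hcon
  have hw : -(Real.log L) / (n:ℝ) < sSup S := by
    rw [div_lt_iff₀ hn']
    nlinarith [hlog]
  obtain ⟨v, hvS, hvgt⟩ := exists_lt_of_lt_csSup hSne hw
  have hkv := key v hvS
  have h5 : -(n:ℝ) * v < Real.log L := by
    have h6 : (n:ℝ) * (-(Real.log L) / (n:ℝ)) < (n:ℝ) * v := (mul_lt_mul_iff_right₀ hn').2 hvgt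
    have h7 : (n:ℝ) * (-(Real.log L) / (n:ℝ)) = -Real.log L := by
      field_simp
    linarith
  have h8 : Real.exp (-(n:ℝ) * v) < L := by
    calc Real.exp (-(n:ℝ) * v) < Real.exp (Real.log L) := Real.exp_lt_exp.2 h5
      _ = L := Real.exp_log hLpos
  linarith
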